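/- Let G = (V,E) be a connected finite simple graph with |V| ≥ 3, let G' be the bipartite construction of G, and let k ≥ 1. Then the k-subdivision S_k(G') admits a fixed point free automorphism if and only if G admits a fixed point free automorphism. -/

import Mathlib

/-- The bipartite construction: vertex set `V ⊕ (E × {1,2})`; `u ∈ V` is adjacent to
`(e, i)` iff `u` is an endpoint of the edge `e`, and there are no other edges. -/
def bipartiteConstruction {V : Type} (G : SimpleGraph V) :
    SimpleGraph (V ⊕ (G.edgeSet × Bool)) :=
  SimpleGraph.fromRel (fun x y =>
    ∃ (u : V) (e : G.edgeSet) (i : Bool),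
      x = Sum.inl u ∧ y = Sum.inr (e, i) ∧ u ∈ (e : Sym2 V))
/-- The `k`-subdivision of a graph `H`: each edge of `H` is replaced by a path with `k`
internal vertices.  A linear order on the vertices is used to pick, for each edge, which
endpoint is attached to the internal vertex of index `0` (any choice gives the same graph
up to isomorphism). -/
def kSubdivision {W : Type} (L : LinearOrder W) (k : ℕ) (H : SimpleGraph W) :
    SimpleGraph (W ⊕ (H.edgeSet × Fin k)) :=
  letI := L
  SimpleGraph.fromRel (fun x y =>
    (∃ (e : H.edgeSet) (j : Fin k),
       x = Sum.inl (Sym2.inf (e : Sym2 W)) ∧ y = Sum.inr (e, j) ∧ (j : ℕ) = 0) ∨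
    (∃ (e : H.edgeSet) (j : Fin k),
       x = Sum.inl (Sym2.sup (e : Sym2 W)) ∧ y = Sum.inr (e, j) ∧ (j : ℕ) = k - 1) ∨
    (∃ (e : H.edgeSet) (i j : Fin k),
       x = Sum.inr (e, i) ∧ y = Sum.inr (e, j) ∧ (i : ℕ) + 1 = (j : ℕ)))
/-- A graph has a fixed point free automorphism if some automorphism maps no vertex
to itself. -/
def HasFPFAut {W : Type} (H : SimpleGraph W) : Prop :=
  ∃ φ : H ≃g H, ∀ v, φ v ≠ v


open SimpleGraph Sum
set_option linter.unusedSectionVars false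

section Helpers
variable {α β : Type} {A : SimpleGraph α} {B : SimpleGraph β}

lemma iso_reachable (f : A ≃g B) {u v : α} (h : A.Reachable u v) :
    B.Reachable (f u) (f v) := by
  obtain ⟨p⟩ := h
  exact ⟨p.map f.toHom⟩

lemma iso_dist_le (f : A ≃g B) (u v : α) : B.dist (f u) (f v) ≤ A.dist u v := by
  by_cases h : A.Reachable u v
  · obtain ⟨p, hp⟩ := h.exists_walk_length_eq_dist
    calc B.dist (f u) (f v) ≤ (p.map f.toHom).length := SimpleGraph.dist_le _
      _ = A.dist u v := by rw [SimpleGraph.Walk.length_map, hp]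
  · have h' : ¬ B.Reachable (f u) (f v) := fun hr => h (by simpa using iso_reachable f.symm hr)
    rw [SimpleGraph.dist_eq_zero_iff_eq_or_not_reachable.mpr (Or.inr h')]
    exact Nat.zero_le _

lemma iso_dist_eq (f : A ≃g B) (u v : α) : B.dist (f u) (f v) = A.dist u v := by
  refine le_antisymm (iso_dist_le f u v) ?_
  have := iso_dist_le f.symm (f u) (f v)
  simpa using this

/-- `x` has at least three distinct neighbours. -/
def HasDeg3 (A : SimpleGraph α) (x : α) : Prop :=
  ∃ a b c, a ≠ b ∧ a ≠ c ∧ b ≠ c ∧ A.Adj x a ∧ A.Adj x b ∧ A.Adj x c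

lemma iso_hasDeg3 (f : A ≃g B) (x : α) : HasDeg3 B (f x) ↔ HasDeg3 A x := by
  constructor
  · rintro ⟨a, b, c, hab, hac, hbc, ha, hb, hc⟩
    refine ⟨f.symm a, f.symm b, f.symm c, by simpa using hab, by simpa using hac,
      by simpa using hbc, ?_, ?_, ?_⟩ <;>
    · first
      | (have := f.symm.map_adj_iff.mpr ha; simpa using this)
      | (have := f.symm.map_adj_iff.mpr hb; simpa using this)
      | (have := f.symm.map_adj_iff.mpr hc; simpa using this)
  · rintro ⟨a, b, c, hab, hac, hbc, ha, hb, hc⟩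
    exact ⟨f a, f b, f c, by simpa using hab, by simpa using hac, by simpa using hbc,
      f.map_adj_iff.mpr ha, f.map_adj_iff.mpr hb, f.map_adj_iff.mpr hc⟩

end Helpers


section SubdivSection
variable {W : Type} [L : LinearOrder W] {k : ℕ} {H : SimpleGraph W}

lemma myInfSup (s : Sym2 W) : s(Sym2.inf s, Sym2.sup s) = s := by
  induction s using Sym2.ind with
  | _ a b =>
    rcases le_total a b with h | h
    · rw [Sym2.inf_mk, Sym2.sup_mk, inf_eq_left.mpr h, sup_eq_right.mpr h]
    · rw [Sym2.inf_mk, Sym2.sup_mk, inf_eq_right.mpr h, sup_eq_left.mpr h, Sym2.eq_swap]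

lemma edge_adj_inf_sup (E : H.edgeSet) :
    H.Adj (Sym2.inf (E : Sym2 W)) (Sym2.sup (E : Sym2 W)) := by
  have h := E.2
  rw [← myInfSup (E : Sym2 W)] at h
  exact h

lemma edge_mem_cases {w : W} {E : H.edgeSet} (hw : w ∈ (E : Sym2 W)) :
    w = Sym2.inf (E : Sym2 W) ∨ w = Sym2.sup (E : Sym2 W) := by
  rw [← myInfSup (E : Sym2 W)] at hw
  exact Sym2.mem_iff.mp hw

/-- The relation generating the subdivision. -/
def SRel (k : ℕ) (H : SimpleGraph W) (x y : W ⊕ (H.edgeSet × Fin k)) : Prop :=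
  (∃ (e : H.edgeSet) (j : Fin k),
     x = Sum.inl (Sym2.inf (e : Sym2 W)) ∧ y = Sum.inr (e, j) ∧ (j : ℕ) = 0) ∨
  (∃ (e : H.edgeSet) (j : Fin k),
     x = Sum.inl (Sym2.sup (e : Sym2 W)) ∧ y = Sum.inr (e, j) ∧ (j : ℕ) = k - 1) ∨
  (∃ (e : H.edgeSet) (i j : Fin k),
     x = Sum.inr (e, i) ∧ y = Sum.inr (e, j) ∧ (i : ℕ) + 1 = (j : ℕ))

lemma subdiv_adj {x y : W ⊕ (H.edgeSet × Fin k)} :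
    (kSubdivision L k H).Adj x y ↔ x ≠ y ∧ (SRel k H x y ∨ SRel k H y x) :=
  SimpleGraph.fromRel_adj _ x y

/-- The distance-to-`inl w₀` potential on the subdivision. -/
noncomputable def mu (k : ℕ) (H : SimpleGraph W) (w₀ : W) : W ⊕ (H.edgeSet × Fin k) → ℕ
  | Sum.inl w => (k+1) * H.dist w w₀
  | Sum.inr p => min (((p.2 : ℕ) + 1) + (k+1) * H.dist (Sym2.inf (p.1 : Sym2 W)) w₀)
      ((k - (p.2 : ℕ)) + (k+1) * H.dist (Sym2.sup (p.1 : Sym2 W)) w₀)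

lemma dist_adj_le (hc : H.Connected) {a b : W} (h : H.Adj a b) (w₀ : W) :
    H.dist a w₀ ≤ H.dist b w₀ + 1 := by
  have h1 := hc.dist_triangle (u := a) (v := b) (w := w₀)
  have h2 : H.dist a b ≤ 1 := by
    have := SimpleGraph.dist_le (SimpleGraph.Walk.cons h SimpleGraph.Walk.nil)
    simpa using this
  omega

lemma mu_step (hc : H.Connected) (w₀ : W) {x y : W ⊕ (H.edgeSet × Fin k)}
    (h : (kSubdivision L k H).Adj x y) :
    mu k H w₀ x ≤ mu k H w₀ y + 1 ∧ mu k H w₀ y ≤ mu k H w₀ x + 1 := by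
  have key : ∀ x y, SRel k H x y →
      mu k H w₀ x ≤ mu k H w₀ y + 1 ∧ mu k H w₀ y ≤ mu k H w₀ x + 1 := by
    rintro x y (⟨E, j, rfl, rfl, hj⟩ | ⟨E, j, rfl, rfl, hj⟩ | ⟨E, i, j, rfl, rfl, hij⟩)
    · have hAB := dist_adj_le hc (edge_adj_inf_sup E) w₀
      have hBA := dist_adj_le hc (edge_adj_inf_sup E).symm w₀
      have hAB' : (k+1) * H.dist (Sym2.inf (E : Sym2 W)) w₀ ≤
          (k+1) * H.dist (Sym2.sup (E : Sym2 W)) w₀ + (k+1) := by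
        calc (k+1) * H.dist (Sym2.inf (E : Sym2 W)) w₀
            ≤ (k+1) * (H.dist (Sym2.sup (E : Sym2 W)) w₀ + 1) := Nat.mul_le_mul_left _ hAB
          _ = _ := by ring
      simp only [mu]
      have hjk := j.isLt
      omega
    · have hBA := dist_adj_le hc (edge_adj_inf_sup E).symm w₀
      have hBA' : (k+1) * H.dist (Sym2.sup (E : Sym2 W)) w₀ ≤
          (k+1) * H.dist (Sym2.inf (E : Sym2 W)) w₀ + (k+1) := by
        calc (k+1) * H.dist (Sym2.sup (E : Sym2 W)) w₀
            ≤ (k+1) * (H.dist (Sym2.inf (E : Sym2 W)) w₀ + 1) := Nat.mul_le_mul_left _ hBA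
          _ = _ := by ring
      simp only [mu]
      have hjk := j.isLt
      omega
    · simp only [mu]
      have hik := i.isLt
      have hjk := j.isLt
      omega
  rcases subdiv_adj.mp h with ⟨hne, hr | hr⟩
  · exact key x y hr
  · exact (key y x hr).symm

lemma mu_eq_zero (hc : H.Connected) (w₀ : W) {x : W ⊕ (H.edgeSet × Fin k)} :
    mu k H w₀ x = 0 ↔ x = Sum.inl w₀ := by
  cases x with
  | inl w =>
    simp only [mu, Nat.mul_eq_zero, Sum.inl.injEq]
    rw [hc.dist_eq_zero_iff]
    simp
  | inr p =>
    simp only [mu]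
    have := p.2.isLt
    constructor
    · intro h; omega
    · intro h; exact absurd h (by simp)

lemma mu_descend (hc : H.Connected) (hk : 1 ≤ k) (w₀ : W) {x : W ⊕ (H.edgeSet × Fin k)}
    (hx : 0 < mu k H w₀ x) :
    ∃ y, (kSubdivision L k H).Adj x y ∧ mu k H w₀ y < mu k H w₀ x := by
  cases x with
  | inl w =>
    have hd : 0 < H.dist w w₀ := by
      rcases Nat.eq_zero_or_pos (H.dist w w₀) with h | h
      · simp [mu, h] at hx
      · exact h
    obtain ⟨d', hd'⟩ : ∃ d', H.dist w w₀ = d' + 1 := ⟨_, (Nat.succ_pred_eq_of_pos hd).symm⟩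
    have hreach : H.Reachable w w₀ := hc w w₀
    obtain ⟨p, hp⟩ := hreach.exists_walk_length_eq_dist
    rcases p with _ | @⟨_, m, _, hadj, q⟩
    · rw [SimpleGraph.Walk.length_nil] at hp; omega
    · have hq : H.dist m w₀ ≤ d' := by
        have h1 := SimpleGraph.dist_le q
        rw [SimpleGraph.Walk.length_cons] at hp
        omega
      set E : H.edgeSet := ⟨s(w, m), hadj⟩ with hE
      have hmem : w ∈ (E : Sym2 W) := Sym2.mem_mk_left _ _
      have hne : w ≠ m := hadj.ne
      rcases edge_mem_cases hmem with hcase | hcase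
      · have hinfE : Sym2.inf (E : Sym2 W) = w ⊓ m := by simp [hE]
        have hle : w ≤ m := inf_eq_left.mp (by rw [← hinfE, ← hcase])
        have hsup : Sym2.sup (E : Sym2 W) = m := by
          simp [hE, sup_eq_right.mpr hle]
        refine ⟨Sum.inr (E, ⟨0, hk⟩), ?_, ?_⟩
        · rw [subdiv_adj]
          exact ⟨by simp, Or.inl (Or.inl ⟨E, ⟨0, hk⟩, by rw [← hcase], rfl, rfl⟩)⟩
        · simp only [mu, Fin.val_mk]
          have h1 : H.dist (Sym2.inf (s(w, m) : Sym2 W)) w₀ = d' + 1 := by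
            rw [Sym2.inf_mk, inf_eq_left.mpr hle, hd']
          have h3 : (k+1) * H.dist (Sym2.sup (s(w, m) : Sym2 W)) w₀ ≤ (k+1) * d' := by
            rw [Sym2.sup_mk, sup_eq_right.mpr hle]
            exact Nat.mul_le_mul_left _ hq
          rw [hd', h1]
          have h4 : (k+1) * (d'+1) = (k+1) * d' + (k+1) := by ring
          rw [hsup]
          have := Nat.mul_le_mul_left (k+1) hq
          omega
      · have hsupE : Sym2.sup (E : Sym2 W) = w ⊔ m := by simp [hE]
        have hle : m ≤ w := sup_eq_left.mp (by rw [← hsupE, ← hcase])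
        have hinf : Sym2.inf (E : Sym2 W) = m := by
          simp [hE, inf_eq_right.mpr hle]
        refine ⟨Sum.inr (E, ⟨k-1, by omega⟩), ?_, ?_⟩
        · rw [subdiv_adj]
          exact ⟨by simp, Or.inl (Or.inr (Or.inl ⟨E, ⟨k-1, by omega⟩, by rw [← hcase], rfl, rfl⟩))⟩
        · simp only [mu, Fin.val_mk]
          have h1 : H.dist (Sym2.sup (s(w, m) : Sym2 W)) w₀ = d' + 1 := by
            rw [Sym2.sup_mk, sup_eq_left.mpr hle, hd']
          have h3 : (k+1) * H.dist (Sym2.inf (s(w, m) : Sym2 W)) w₀ ≤ (k+1) * d' := by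
            rw [Sym2.inf_mk, inf_eq_right.mpr hle]
            exact Nat.mul_le_mul_left _ hq
          rw [hd', h1]
          have h4 : (k+1) * (d'+1) = (k+1) * d' + (k+1) := by ring
          rw [hinf]
          have := Nat.mul_le_mul_left (k+1) hq
          omega
  | inr p =>
    obtain ⟨E, j⟩ := p
    have hjk := j.isLt
    rcases le_or_gt (((j:ℕ)+1) + (k+1) * H.dist (Sym2.inf (E : Sym2 W)) w₀)
      ((k - (j:ℕ)) + (k+1) * H.dist (Sym2.sup (E : Sym2 W)) w₀) with hmin | hmin
    · by_cases hj0 : (j : ℕ) = 0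
      · refine ⟨Sum.inl (Sym2.inf (E : Sym2 W)), ?_, ?_⟩
        · rw [subdiv_adj]
          exact ⟨by simp, Or.inr (Or.inl ⟨E, j, rfl, rfl, hj0⟩)⟩
        · simp only [mu, Fin.val_mk]
          omega
      · refine ⟨Sum.inr (E, ⟨(j:ℕ)-1, by omega⟩), ?_, ?_⟩
        · rw [subdiv_adj]
          refine ⟨?_, Or.inr (Or.inr (Or.inr ⟨E, ⟨(j:ℕ)-1, by omega⟩, j, rfl, rfl, by simp; omega⟩))⟩
          simp only [ne_eq, Sum.inr.injEq, Prod.mk.injEq, true_and]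
          intro hcon
          have := congrArg Fin.val hcon
          simp at this
          omega
        · simp only [mu, Fin.val_mk]
          omega
    · by_cases hjk1 : (j : ℕ) = k - 1
      · refine ⟨Sum.inl (Sym2.sup (E : Sym2 W)), ?_, ?_⟩
        · rw [subdiv_adj]
          exact ⟨by simp, Or.inr (Or.inr (Or.inl ⟨E, j, rfl, rfl, hjk1⟩))⟩
        · simp only [mu, Fin.val_mk]
          omega
      · refine ⟨Sum.inr (E, ⟨(j:ℕ)+1, by omega⟩), ?_, ?_⟩
        · rw [subdiv_adj]
          refine ⟨?_, Or.inl (Or.inr (Or.inr ⟨E, j, ⟨(j:ℕ)+1, by omega⟩, rfl, rfl, by simp⟩))⟩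
          simp only [ne_eq, Sum.inr.injEq, Prod.mk.injEq, true_and]
          intro hcon
          have := congrArg Fin.val hcon
          simp at this
        · simp only [mu, Fin.val_mk]
          omega

lemma mu_le_walk (hc : H.Connected) (w₀ : W) {x z : W ⊕ (H.edgeSet × Fin k)}
    (p : (kSubdivision L k H).Walk x z) :
    mu k H w₀ x ≤ mu k H w₀ z + p.length := by
  induction p with
  | nil => simp
  | cons h q ih =>
    have h1 := (mu_step hc w₀ h).1
    rw [SimpleGraph.Walk.length_cons]
    omega

lemma exists_walk_mu (hc : H.Connected) (hk : 1 ≤ k) (w₀ : W)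
    (x : W ⊕ (H.edgeSet × Fin k)) :
    ∃ p : (kSubdivision L k H).Walk x (Sum.inl w₀), p.length = mu k H w₀ x := by
  generalize hn : mu k H w₀ x = n
  induction n using Nat.strong_induction_on generalizing x with
  | _ n ih =>
    rcases Nat.eq_zero_or_pos n with rfl | hpos
    · have : x = Sum.inl w₀ := (mu_eq_zero hc w₀).mp hn
      subst this
      exact ⟨SimpleGraph.Walk.nil, by simp⟩
    · obtain ⟨y, hadj, hlt⟩ := mu_descend hc hk w₀ (x := x) (by omega)
      have hstep := (mu_step hc w₀ hadj).1
      have hy : mu k H w₀ y = n - 1 := by omega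
      obtain ⟨q, hq⟩ := ih (n-1) (by omega) y hy
      exact ⟨SimpleGraph.Walk.cons hadj q, by rw [SimpleGraph.Walk.length_cons]; omega⟩

lemma subdiv_dist (hc : H.Connected) (hk : 1 ≤ k) (w₀ : W)
    (x : W ⊕ (H.edgeSet × Fin k)) :
    (kSubdivision L k H).dist x (Sum.inl w₀) = mu k H w₀ x := by
  obtain ⟨p, hp⟩ := exists_walk_mu hc hk w₀ x
  refine le_antisymm (hp ▸ SimpleGraph.dist_le p) ?_
  have hr : (kSubdivision L k H).Reachable x (Sum.inl w₀) := ⟨p⟩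
  obtain ⟨q, hq⟩ := hr.exists_walk_length_eq_dist
  have h1 := mu_le_walk hc w₀ q
  have h2 : mu k H w₀ (Sum.inl w₀ : W ⊕ (H.edgeSet × Fin k)) = 0 :=
    (mu_eq_zero hc w₀).mpr rfl
  omega

lemma subdiv_dist_inl (hc : H.Connected) (hk : 1 ≤ k) (w w' : W) :
    (kSubdivision L k H).dist (Sum.inl w) (Sum.inl w') = (k+1) * H.dist w w' := by
  rw [subdiv_dist hc hk w' (Sum.inl w)]
  rfl

lemma subdiv_adj_iff_dist (hc : H.Connected) (hk : 1 ≤ k) {w w' : W} :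
    H.Adj w w' ↔ (kSubdivision L k H).dist (Sum.inl w) (Sum.inl w') = k + 1 := by
  rw [subdiv_dist_inl hc hk]
  constructor
  · intro h
    rw [SimpleGraph.dist_eq_one_iff_adj.mpr h, mul_one]
  · intro h
    apply SimpleGraph.dist_eq_one_iff_adj.mp
    have : (k+1) * H.dist w w' = (k+1) * 1 := by omega
    exact Nat.eq_of_mul_eq_mul_left (by omega) this

lemma subdiv_deg3_inl (hk : 1 ≤ k) {x : W ⊕ (H.edgeSet × Fin k)}
    (h : HasDeg3 (kSubdivision L k H) x) : ∃ w, x = Sum.inl w := by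
  cases x with
  | inl w => exact ⟨w, rfl⟩
  | inr p =>
    exfalso
    obtain ⟨E, j⟩ := p
    obtain ⟨a, b, c, hab, hac, hbc, ha, hb, hc⟩ := h
    have hjlt := j.isLt
    have key : ∀ y, (kSubdivision L k H).Adj (Sum.inr (E, j)) y →
        (y = Sum.inl (Sym2.inf (E : Sym2 W)) ∧ (j:ℕ) = 0) ∨
        (y = Sum.inl (Sym2.sup (E : Sym2 W)) ∧ (j:ℕ) = k - 1) ∨
        (∃ j' : Fin k, y = Sum.inr (E, j') ∧
          ((j':ℕ) + 1 = (j:ℕ) ∨ (j:ℕ) + 1 = (j':ℕ))) := by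
      intro y hy
      rcases subdiv_adj.mp hy with ⟨hne, hr | hr⟩
      · rcases hr with ⟨E', j', h1, h2, h3⟩ | ⟨E', j', h1, h2, h3⟩ | ⟨E', i', j', h1, h2, h3⟩
      
        · exact absurd h1 (by simp)
        · exact absurd h1 (by simp)
        · simp only [Sum.inr.injEq, Prod.mk.injEq] at h1
          rcases h1 with ⟨rfl, rfl⟩
          exact Or.inr (Or.inr ⟨j', h2, Or.inr h3⟩)
      · rcases hr with ⟨E', j', h1, h2, h3⟩ | ⟨E', j', h1, h2, h3⟩ | ⟨E', i', j', h1, h2, h3⟩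
        · simp only [Sum.inr.injEq, Prod.mk.injEq] at h2
          rcases h2 with ⟨rfl, rfl⟩
          exact Or.inl ⟨h1, h3⟩
        · simp only [Sum.inr.injEq, Prod.mk.injEq] at h2
          rcases h2 with ⟨rfl, rfl⟩
          exact Or.inr (Or.inl ⟨h1, h3⟩)
        · simp only [Sum.inr.injEq, Prod.mk.injEq] at h2
          rcases h2 with ⟨rfl, rfl⟩
          exact Or.inr (Or.inr ⟨i', h1, Or.inl h3⟩)
    classical
    set P : W ⊕ (H.edgeSet × Fin k) :=
      if _h : (j:ℕ) = 0 then Sum.inl (Sym2.inf (E : Sym2 W))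
        else Sum.inr (E, ⟨(j:ℕ)-1, by omega⟩) with hP
    set Q : W ⊕ (H.edgeSet × Fin k) :=
      if _h : (j:ℕ) = k-1 then Sum.inl (Sym2.sup (E : Sym2 W))
        else Sum.inr (E, ⟨(j:ℕ)+1, by omega⟩) with hQ
    have key2 : ∀ y, (kSubdivision L k H).Adj (Sum.inr (E, j)) y → y = P ∨ y = Q := by
      intro y hy
      rcases key y hy with ⟨rfl, h0⟩ | ⟨rfl, h0⟩ | ⟨j', rfl, h0 | h0⟩
      · left; rw [hP, dif_pos h0]
      · right; rw [hQ, dif_pos h0]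
      · left
        rw [hP, dif_neg (by omega)]
        simp only [Sum.inr.injEq, Prod.mk.injEq, true_and]
        exact Fin.ext (by simp; omega)
      · right
        have hj' := j'.isLt
        rw [hQ, dif_neg (by omega)]
        simp only [Sum.inr.injEq, Prod.mk.injEq, true_and]
        exact Fin.ext (by simp; omega)
    rcases key2 a ha with rfl | rfl <;> rcases key2 b hb with h1 | h1 <;>
      rcases key2 c hc with h2 | h2 <;> simp_all

lemma subdiv_deg3_of (hk : 1 ≤ k) {w : W} (h : HasDeg3 H w) :
    HasDeg3 (kSubdivision L k H) (Sum.inl w) := by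
  classical
  obtain ⟨a, b, c, hab, hac, hbc, ha, hb, hc⟩ := h
  have hadj : ∀ (u : W) (hu : H.Adj w u), (kSubdivision L k H).Adj (Sum.inl w)
      (Sum.inr (⟨s(w,u), hu⟩,
        if w = Sym2.inf ((⟨s(w,u), hu⟩ : H.edgeSet) : Sym2 W) then (⟨0, hk⟩ : Fin k)
          else ⟨k-1, by omega⟩)) := by
    intro u hu
    rw [subdiv_adj]
    refine ⟨by simp, Or.inl ?_⟩
    have hmem : w ∈ ((⟨s(w,u), hu⟩ : H.edgeSet) : Sym2 W) := Sym2.mem_mk_left _ _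
    rcases edge_mem_cases hmem with hcase | hcase
    · rw [if_pos hcase]
      exact Or.inl ⟨_, _, by rw [← hcase], rfl, rfl⟩
    · have hne : ¬ (w = Sym2.inf ((⟨s(w,u), hu⟩ : H.edgeSet) : Sym2 W)) := by
        intro hcon
        have := edge_adj_inf_sup (⟨s(w,u), hu⟩ : H.edgeSet)
        rw [← hcon, ← hcase] at this
        exact this.ne rfl
      rw [if_neg hne]
      exact Or.inr (Or.inl ⟨_, _, by rw [← hcase], rfl, rfl⟩)
  have hdist : ∀ (u₁ u₂ : W) (h₁ : H.Adj w u₁) (h₂ : H.Adj w u₂) (j₁ j₂ : Fin k),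
      u₁ ≠ u₂ → (Sum.inr (⟨s(w,u₁), h₁⟩, j₁) : W ⊕ (H.edgeSet × Fin k)) ≠
        Sum.inr (⟨s(w,u₂), h₂⟩, j₂) := by
    intro u₁ u₂ h₁ h₂ j₁ j₂ hne hcon
    simp only [Sum.inr.injEq, Prod.mk.injEq, Subtype.mk.injEq] at hcon
    rcases Sym2.eq_iff.mp (congrArg Subtype.val hcon.1) with ⟨-, h⟩ | ⟨h, h'⟩
    · exact hne h
    · exact h₂.ne h
  exact ⟨_, _, _, hdist a b ha hb _ _ hab, hdist a c ha hc _ _ hac,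
    hdist b c hb hc _ _ hbc, hadj a ha, hadj b hb, hadj c hc⟩

lemma subdiv_lift (hc : H.Connected) (hk : 1 ≤ k) (h3 : ∃ w, HasDeg3 H w)
    (Φ : kSubdivision L k H ≃g kSubdivision L k H) (w : W) :
    ∃ w', Φ (Sum.inl w) = Sum.inl w' := by
  obtain ⟨w₃, hw₃⟩ := h3
  have inv_char : ∀ x : W ⊕ (H.edgeSet × Fin k),
      (∃ b, HasDeg3 (kSubdivision L k H) b ∧ (k+1) ∣ (kSubdivision L k H).dist x b) →
      ∃ w', x = Sum.inl w' := by
    rintro x ⟨b, hb3, hdvd⟩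
    obtain ⟨wb, rfl⟩ := subdiv_deg3_inl hk hb3
    cases x with
    | inl w' => exact ⟨w', rfl⟩
    | inr p =>
      exfalso
      obtain ⟨E, j⟩ := p
      rw [subdiv_dist hc hk wb] at hdvd
      simp only [mu] at hdvd
      have hjlt := j.isLt
      have hL : (k+1) ∣ (k+1) * H.dist (Sym2.inf (E : Sym2 W)) wb := dvd_mul_right _ _
      have hR : (k+1) ∣ (k+1) * H.dist (Sym2.sup (E : Sym2 W)) wb := dvd_mul_right _ _
      rcases le_total (((j:ℕ)+1) + (k+1) * H.dist (Sym2.inf (E : Sym2 W)) wb)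
        ((k - (j:ℕ)) + (k+1) * H.dist (Sym2.sup (E : Sym2 W)) wb) with hm | hm
      · rw [min_eq_left hm] at hdvd
        have h1 : (k+1) ∣ ((j:ℕ)+1) := by
          have := Nat.dvd_sub hdvd hL
          simpa using this
        have := Nat.le_of_dvd (by omega) h1
        omega
      · rw [min_eq_right hm] at hdvd
        have h1 : (k+1) ∣ (k - (j:ℕ)) := by
          have := Nat.dvd_sub hdvd hR
          simpa using this
        have := Nat.le_of_dvd (by omega) h1
        omega
  apply inv_char
  refine ⟨Φ (Sum.inl w₃), (iso_hasDeg3 Φ _).mpr (subdiv_deg3_of hk hw₃), ?_⟩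
  rw [iso_dist_eq Φ, subdiv_dist_inl hc hk]
  exact dvd_mul_right _ _

theorem subdiv_forward (hc : H.Connected) (hk : 1 ≤ k) (h3 : ∃ w, HasDeg3 H w)
    (hS : HasFPFAut (kSubdivision L k H)) : HasFPFAut H := by
  obtain ⟨Φ, hΦ⟩ := hS
  have spec : ∀ w, Φ (Sum.inl w) = Sum.inl ((subdiv_lift hc hk h3 Φ w).choose) :=
    fun w => (subdiv_lift hc hk h3 Φ w).choose_spec
  have spec' : ∀ w, Φ.symm (Sum.inl w) = Sum.inl ((subdiv_lift hc hk h3 Φ.symm w).choose) :=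
    fun w => (subdiv_lift hc hk h3 Φ.symm w).choose_spec
  set f : W → W := fun w => (subdiv_lift hc hk h3 Φ w).choose with hf
  set g : W → W := fun w => (subdiv_lift hc hk h3 Φ.symm w).choose with hg
  have hleft : ∀ w, g (f w) = w := by
    intro w
    have : Φ.symm (Φ (Sum.inl w)) = Sum.inl w := Φ.symm_apply_apply _
    rw [spec w, spec' (f w)] at this
    exact Sum.inl.inj this
  have hright : ∀ w, f (g w) = w := by
    intro w
    have : Φ (Φ.symm (Sum.inl w)) = Sum.inl w := Φ.apply_symm_apply _
    rw [spec' w, spec (g w)] at this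
    exact Sum.inl.inj this
  have hmapadj : ∀ a b, H.Adj (f a) (f b) ↔ H.Adj a b := by
    intro a b
    rw [subdiv_adj_iff_dist hc hk, subdiv_adj_iff_dist hc hk, ← spec a, ← spec b,
      iso_dist_eq Φ]
  refine ⟨⟨⟨f, g, hleft, hright⟩, ?_⟩, ?_⟩
  · intro a b
    exact hmapadj a b
  · intro w hcon
    apply hΦ (Sum.inl w)
    rw [spec w]
    have h5 : f w = w := hcon
    exact congrArg Sum.inl h5

theorem subdiv_backward (hk : 1 ≤ k) (ψ : H ≃g H) (hψv : ∀ w, ψ w ≠ w)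
    (hψe : ∀ E : H.edgeSet, Sym2.map ψ (E : Sym2 W) ≠ (E : Sym2 W)) :
    HasFPFAut (kSubdivision L k H) := by
  classical
  set ψe : H.edgeSet ≃ H.edgeSet := ψ.mapEdgeSet with hψedef
  have hcoe : ∀ E : H.edgeSet, ((ψe E : H.edgeSet) : Sym2 W) = Sym2.map ψ (E : Sym2 W) :=
    fun E => rfl
  set C : H.edgeSet → Prop :=
    fun E => ψ (Sym2.inf (E : Sym2 W)) = Sym2.inf ((ψe E : H.edgeSet) : Sym2 W) with hC
  have hdichot : ∀ E : H.edgeSet,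
      (ψ (Sym2.inf (E : Sym2 W)) = Sym2.inf ((ψe E : H.edgeSet) : Sym2 W) ∧
       ψ (Sym2.sup (E : Sym2 W)) = Sym2.sup ((ψe E : H.edgeSet) : Sym2 W)) ∨
      (ψ (Sym2.inf (E : Sym2 W)) = Sym2.sup ((ψe E : H.edgeSet) : Sym2 W) ∧
       ψ (Sym2.sup (E : Sym2 W)) = Sym2.inf ((ψe E : H.edgeSet) : Sym2 W)) := by
    intro E
    have h1 : s(ψ (Sym2.inf (E : Sym2 W)), ψ (Sym2.sup (E : Sym2 W))) =
        ((ψe E : H.edgeSet) : Sym2 W) := by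
      rw [hcoe, ← Sym2.map_pair_eq, myInfSup]
    have h2 := myInfSup ((ψe E : H.edgeSet) : Sym2 W)
    exact Sym2.eq_iff.mp (h1.trans h2.symm)
  have hpos : ∀ E : H.edgeSet, C E →
      ψ (Sym2.inf (E : Sym2 W)) = Sym2.inf ((ψe E : H.edgeSet) : Sym2 W) ∧
      ψ (Sym2.sup (E : Sym2 W)) = Sym2.sup ((ψe E : H.edgeSet) : Sym2 W) := by
    intro E hCE
    rcases hdichot E with h | h
    · exact h
    · exfalso
      have := (edge_adj_inf_sup (ψe E)).ne
      exact this (by rw [← hCE, h.1])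
  have hneg : ∀ E : H.edgeSet, ¬ C E →
      ψ (Sym2.inf (E : Sym2 W)) = Sym2.sup ((ψe E : H.edgeSet) : Sym2 W) ∧
      ψ (Sym2.sup (E : Sym2 W)) = Sym2.inf ((ψe E : H.edgeSet) : Sym2 W) := by
    intro E hCE
    rcases hdichot E with h | h
    · exact absurd h.1 hCE
    · exact h
  set F2 : H.edgeSet × Fin k ≃ H.edgeSet × Fin k :=
    { toFun := fun p => (ψe p.1, if C p.1 then p.2 else p.2.rev)
      invFun := fun p => (ψe.symm p.1, if C (ψe.symm p.1) then p.2 else p.2.rev)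
      left_inv := by
        rintro ⟨E, j⟩
        simp only [Equiv.symm_apply_apply]
        by_cases h : C E
        · rw [if_pos h, if_pos h]
        · rw [if_neg h, if_neg h, Fin.rev_rev]
      right_inv := by
        rintro ⟨E, j⟩
        simp only [Equiv.apply_symm_apply]
        by_cases h : C (ψe.symm E)
        · rw [if_pos h, if_pos h]
        · rw [if_neg h, if_neg h, Fin.rev_rev] } with hF2
  set Φe : (W ⊕ (H.edgeSet × Fin k)) ≃ (W ⊕ (H.edgeSet × Fin k)) :=
    Equiv.sumCongr ψ.toEquiv F2 with hΦe
  have hΦinl : ∀ w, Φe (Sum.inl w) = Sum.inl (ψ w) := fun _ => rfl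
  have hΦinr : ∀ (E : H.edgeSet) (j : Fin k),
      Φe (Sum.inr (E, j)) = Sum.inr (ψe E, if C E then j else j.rev) := fun _ _ => rfl
  -- forward relation preservation
  have hrel : ∀ x y, SRel k H x y → SRel k H (Φe x) (Φe y) ∨ SRel k H (Φe y) (Φe x) := by
    rintro x y (⟨E, j, rfl, rfl, hj⟩ | ⟨E, j, rfl, rfl, hj⟩ | ⟨E, i, j, rfl, rfl, hij⟩)
    · by_cases h : C E
      · exact Or.inl (Or.inl ⟨ψe E, j, by rw [hΦinl, (hpos E h).1],
          by rw [hΦinr, if_pos h], hj⟩)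
      · refine Or.inl (Or.inr (Or.inl ⟨ψe E, j.rev, by rw [hΦinl, (hneg E h).1],
          by rw [hΦinr, if_neg h], ?_⟩))
        have := j.isLt
        simp [Fin.val_rev]
        omega
    · by_cases h : C E
      · exact Or.inl (Or.inr (Or.inl ⟨ψe E, j, by rw [hΦinl, (hpos E h).2],
          by rw [hΦinr, if_pos h], hj⟩))
      · refine Or.inl (Or.inl ⟨ψe E, j.rev, by rw [hΦinl, (hneg E h).2],
          by rw [hΦinr, if_neg h], ?_⟩)
        have := j.isLt
        simp [Fin.val_rev]
        omega
    · by_cases h : C E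
      · exact Or.inl (Or.inr (Or.inr ⟨ψe E, i, j, by rw [hΦinr, if_pos h],
          by rw [hΦinr, if_pos h], hij⟩))
      · refine Or.inr (Or.inr (Or.inr ⟨ψe E, j.rev, i.rev, by rw [hΦinr, if_neg h],
          by rw [hΦinr, if_neg h], ?_⟩))
        have h1 := j.isLt
        have h2 := i.isLt
        simp [Fin.val_rev]
        omega
  -- converse relation preservation
  have hrel' : ∀ x y, SRel k H (Φe x) (Φe y) → SRel k H x y ∨ SRel k H y x := by
    intro x y hr
    cases x with
    | inl w =>
      cases y with
      | inl w' =>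
        exfalso
        rw [hΦinl, hΦinl] at hr
        rcases hr with ⟨E', j', h1, h2, h3⟩ | ⟨E', j', h1, h2, h3⟩ | ⟨E', i', j', h1, h2, h3⟩ <;>
          simp at h1 h2
      | inr p =>
        obtain ⟨E, j⟩ := p
        rw [hΦinl, hΦinr] at hr
        have hjlt := j.isLt
        rcases hr with ⟨E', j', h1, h2, h3⟩ | ⟨E', j', h1, h2, h3⟩ | ⟨E', i', j', h1, h2, h3⟩
        · simp only [Sum.inr.injEq, Prod.mk.injEq] at h2
          rcases h2 with ⟨rfl, hJ⟩
          replace h1 : ψ w = Sym2.inf ((ψe E : H.edgeSet) : Sym2 W) := Sum.inl.inj h1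
          by_cases h : C E
          · have hw : w = Sym2.inf (E : Sym2 W) :=
              ψ.toEquiv.injective (h1.trans (hpos E h).1.symm)
            rw [if_pos h] at hJ
            exact Or.inl (Or.inl ⟨E, j, by rw [hw], rfl, by rw [hJ]; exact h3⟩)
          · have hw : w = Sym2.sup (E : Sym2 W) :=
              ψ.toEquiv.injective (h1.trans (hneg E h).2.symm)
            rw [if_neg h] at hJ
            have hrv : (k : ℕ) - ((j:ℕ) + 1) = (j':ℕ) := by
              rw [← hJ]; simp [Fin.val_rev]
            exact Or.inl (Or.inr (Or.inl ⟨E, j, by rw [hw], rfl, by omega⟩))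
        · simp only [Sum.inr.injEq, Prod.mk.injEq] at h2
          rcases h2 with ⟨rfl, hJ⟩
          replace h1 : ψ w = Sym2.sup ((ψe E : H.edgeSet) : Sym2 W) := Sum.inl.inj h1
          by_cases h : C E
          · have hw : w = Sym2.sup (E : Sym2 W) :=
              ψ.toEquiv.injective (h1.trans (hpos E h).2.symm)
            rw [if_pos h] at hJ
            exact Or.inl (Or.inr (Or.inl ⟨E, j, by rw [hw], rfl, by rw [hJ]; exact h3⟩))
          · have hw : w = Sym2.inf (E : Sym2 W) :=
              ψ.toEquiv.injective (h1.trans (hneg E h).1.symm)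
            rw [if_neg h] at hJ
            have hrv : (k : ℕ) - ((j:ℕ) + 1) = (j':ℕ) := by
              rw [← hJ]; simp [Fin.val_rev]
            exact Or.inl (Or.inl ⟨E, j, by rw [hw], rfl, by omega⟩)
        · exfalso; simp at h1
    | inr p =>
      obtain ⟨E, i⟩ := p
      cases y with
      | inl w' =>
        exfalso
        rw [hΦinl, hΦinr] at hr
        rcases hr with ⟨E', j', h1, h2, h3⟩ | ⟨E', j', h1, h2, h3⟩ | ⟨E', i', j', h1, h2, h3⟩ <;>
          simp at h1 h2
      | inr q =>
        obtain ⟨E₂, j⟩ := q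
        rw [hΦinr, hΦinr] at hr
        have hilt := i.isLt
        have hjlt := j.isLt
        rcases hr with ⟨E', j', h1, h2, h3⟩ | ⟨E', j', h1, h2, h3⟩ | ⟨E', i', j', h1, h2, h3⟩
        · exfalso; simp at h1
        · exfalso; simp at h1
        · simp only [Sum.inr.injEq, Prod.mk.injEq] at h1 h2
          rcases h1 with ⟨rfl, hI⟩
          obtain rfl : E = E₂ := (ψe.injective h2.1).symm
          have hJ := h2.2
          by_cases h : C E
          · rw [if_pos h] at hI hJ
            exact Or.inl (Or.inr (Or.inr ⟨E, i, j, rfl, rfl, by rw [hI, hJ]; exact h3⟩))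
          · rw [if_neg h] at hI hJ
            have h4 : (k : ℕ) - ((i:ℕ) + 1) = (i':ℕ) := by rw [← hI]; simp [Fin.val_rev]
            have h5 : (k : ℕ) - ((j:ℕ) + 1) = (j':ℕ) := by rw [← hJ]; simp [Fin.val_rev]
            exact Or.inr (Or.inr (Or.inr ⟨E, j, i, rfl, rfl, by omega⟩))
  refine ⟨⟨Φe, ?_⟩, ?_⟩
  · intro x y
    rw [subdiv_adj, subdiv_adj]
    constructor
    · rintro ⟨hne, hor⟩
      refine ⟨fun hxy => hne (by rw [hxy]), ?_⟩
      rcases hor with h | h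
      · exact hrel' x y h
      · exact (hrel' y x h).symm
    · rintro ⟨hne, hor⟩
      refine ⟨Φe.injective.ne hne, ?_⟩
      rcases hor with h | h
      · exact hrel x y h
      · exact (hrel y x h).symm
  · intro v
    cases v with
    | inl w =>
      rw [RelIso.coe_fn_mk, hΦinl]
      simp only [ne_eq, Sum.inl.injEq]
      exact hψv w
    | inr p =>
      obtain ⟨E, j⟩ := p
      rw [RelIso.coe_fn_mk, hΦinr]
      simp only [ne_eq, Sum.inr.injEq, Prod.mk.injEq, not_and]
      intro hcon
      exfalso
      apply hψe E
      rw [← hcoe, hcon]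

end SubdivSection

section BCSection
variable {V : Type} {G : SimpleGraph V}

lemma bc_adj {x y : V ⊕ (G.edgeSet × Bool)} :
    (bipartiteConstruction G).Adj x y ↔ x ≠ y ∧
      ((∃ u e i, x = Sum.inl u ∧ y = Sum.inr (e,i) ∧ u ∈ (e : Sym2 V)) ∨
       (∃ u e i, y = Sum.inl u ∧ x = Sum.inr (e,i) ∧ u ∈ (e : Sym2 V))) :=
  SimpleGraph.fromRel_adj _ x y

lemma bc_adj_mk {u : V} {e : G.edgeSet} {i : Bool} (h : u ∈ (e : Sym2 V)) :
    (bipartiteConstruction G).Adj (Sum.inl u) (Sum.inr (e,i)) :=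
  bc_adj.mpr ⟨by simp, Or.inl ⟨u, e, i, rfl, rfl, h⟩⟩

lemma bc_reach_inl {u v : V} (huv : G.Adj u v) :
    (bipartiteConstruction G).Reachable (Sum.inl u) (Sum.inl v) := by
  have h1 : (bipartiteConstruction G).Adj (Sum.inl u) (Sum.inr (⟨s(u,v), huv⟩, true)) :=
    bc_adj_mk (Sym2.mem_mk_left _ _)
  have h2 : (bipartiteConstruction G).Adj (Sum.inl v) (Sum.inr (⟨s(u,v), huv⟩, true)) :=
    bc_adj_mk (Sym2.mem_mk_right _ _)
  exact h1.reachable.trans h2.reachable.symm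

lemma bc_connected (hc : G.Connected) : (bipartiteConstruction G).Connected := by
  obtain ⟨v₀⟩ := hc.nonempty
  rw [SimpleGraph.connected_iff]
  refine ⟨?_, ⟨Sum.inl v₀⟩⟩
  have hV : ∀ u v : V, (bipartiteConstruction G).Reachable (Sum.inl u) (Sum.inl v) := by
    intro u v
    obtain ⟨p⟩ := hc.preconnected u v
    induction p with
    | nil => exact SimpleGraph.Reachable.refl _
    | cons h q ih => exact (bc_reach_inl h).trans ih
  have hx : ∀ x : V ⊕ (G.edgeSet × Bool), ∃ u,
      (bipartiteConstruction G).Reachable x (Sum.inl u) := by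
    intro x
    cases x with
    | inl u => exact ⟨u, SimpleGraph.Reachable.refl _⟩
    | inr p =>
      obtain ⟨e, i⟩ := p
      obtain ⟨⟨a, b⟩, hab⟩ := Quot.exists_rep (e : Sym2 V)
      have hmem : a ∈ (e : Sym2 V) := by
        rw [← hab]; exact Sym2.mem_mk_left a b
      exact ⟨a, (bc_adj_mk hmem).symm.reachable⟩
  intro x y
  obtain ⟨u, hu⟩ := hx x
  obtain ⟨v, hv⟩ := hx y
  exact hu.trans ((hV u v).trans hv.symm)

/-- Numeric side indicator. -/
def bsideN : V ⊕ (G.edgeSet × Bool) → ℕ := fun x => match x with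
  | Sum.inl _ => 0
  | Sum.inr _ => 1

lemma bc_adj_side {x y : V ⊕ (G.edgeSet × Bool)} (h : (bipartiteConstruction G).Adj x y) :
    bsideN x + bsideN y = 1 := by
  rcases (bc_adj.mp h).2 with ⟨u, e, i, rfl, rfl, -⟩ | ⟨u, e, i, rfl, rfl, -⟩ <;> rfl

lemma bc_walk_parity {x y : V ⊕ (G.edgeSet × Bool)}
    (p : (bipartiteConstruction G).Walk x y) :
    p.length % 2 = (bsideN x + bsideN y) % 2 := by
  have haux : ∀ u : V ⊕ (G.edgeSet × Bool), (bsideN u + bsideN u) % 2 = 0 := by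
    intro u; cases u <;> simp [bsideN]
  induction p with
  | nil => simp only [SimpleGraph.Walk.length_nil, Nat.zero_mod]; exact (haux _).symm
  | cons h q ih =>
    have h1 := bc_adj_side h
    rw [SimpleGraph.Walk.length_cons]
    omega

lemma bc_dist_parity (hc : G.Connected) (x y : V ⊕ (G.edgeSet × Bool)) :
    (bipartiteConstruction G).dist x y % 2 = (bsideN x + bsideN y) % 2 := by
  obtain ⟨p, hp⟩ := ((bc_connected hc).preconnected x y).exists_walk_length_eq_dist
  rw [← hp]
  exact bc_walk_parity p

lemma bc_not_deg3_inr (e : G.edgeSet) (i : Bool) :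
    ¬ HasDeg3 (bipartiteConstruction G) (Sum.inr (e,i)) := by
  rintro ⟨a, b, c, hab, hac, hbc, ha, hb, hc⟩
  obtain ⟨⟨x₁, x₂⟩, hx⟩ := Quot.exists_rep (e : Sym2 V)
  have key : ∀ y, (bipartiteConstruction G).Adj (Sum.inr (e,i)) y →
      y = Sum.inl x₁ ∨ y = Sum.inl x₂ := by
    intro y hy
    rcases (bc_adj.mp hy).2 with ⟨u, e', i', h1, h2, h3⟩ | ⟨u, e', i', h1, h2, h3⟩
    · exact absurd h1 (by simp)
    · simp only [Sum.inr.injEq, Prod.mk.injEq] at h2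
      rcases h2 with ⟨rfl, rfl⟩
      rw [← hx] at h3
      rcases Sym2.mem_iff.mp h3 with rfl | rfl
      · exact Or.inl h1
      · exact Or.inr h1
  rcases key a ha with rfl | rfl <;> rcases key b hb with h1 | h1 <;>
    rcases key c hc with h2 | h2 <;> simp_all

lemma bc_deg3_inl {v u₁ u₂ : V} (h1 : G.Adj v u₁) (h2 : G.Adj v u₂) (hne : u₁ ≠ u₂) :
    HasDeg3 (bipartiteConstruction G) (Sum.inl v) := by
  have hEne : (⟨s(v,u₁), h1⟩ : G.edgeSet) ≠ ⟨s(v,u₂), h2⟩ := by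
    intro hcon
    replace hcon := congrArg Subtype.val hcon
    rcases Sym2.eq_iff.mp hcon with ⟨-, h⟩ | ⟨h, -⟩
    · exact hne h
    · exact h2.ne h
  refine ⟨Sum.inr (⟨s(v,u₁), h1⟩, true), Sum.inr (⟨s(v,u₁), h1⟩, false),
    Sum.inr (⟨s(v,u₂), h2⟩, true), by simp, by simp [hEne], by simp [hEne],
    bc_adj_mk (Sym2.mem_mk_left _ _), bc_adj_mk (Sym2.mem_mk_left _ _),
    bc_adj_mk (Sym2.mem_mk_left _ _)⟩

lemma exists_two_nbrs [Fintype V] (hc : G.Connected) (hV : 3 ≤ Fintype.card V) :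
    ∃ v u₁ u₂, u₁ ≠ u₂ ∧ G.Adj v u₁ ∧ G.Adj v u₂ := by
  by_contra hcon
  push_neg at hcon
  have huniq : ∀ v a b, G.Adj v a → G.Adj v b → a = b := by
    intro v a b ha hb
    by_contra hne
    exact (hcon v a b hne ha) hb
  obtain ⟨x, y, z, hxy, hxz, hyz⟩ := (Fintype.two_lt_card_iff (α := V)).mp (by omega)
  obtain ⟨p⟩ := hc.preconnected x y
  rcases p with _ | @⟨_, n, _, hadj, q⟩
  · exact hxy rfl
  · have claim : ∀ (s t : V) (p : G.Walk s t), (s = x ∨ s = n) → (t = x ∨ t = n) := by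
      intro s t p
      induction p with
      | nil => exact id
      | @cons s m t h q ih =>
        intro hs
        apply ih
        rcases hs with rfl | rfl
        · exact Or.inr (huniq s m n h hadj)
        · exact Or.inl (huniq s m x h hadj.symm)
    have hy' : y = x ∨ y = n := by
      obtain ⟨py⟩ := hc.preconnected x y
      exact claim x y py (Or.inl rfl)
    have hz' : z = x ∨ z = n := by
      obtain ⟨pz⟩ := hc.preconnected x z
      exact claim x z pz (Or.inl rfl)
    rcases hy' with rfl | rfl
    · exact hxy rfl
    · rcases hz' with rfl | rfl
      · exact hxz rfl
      · exact hyz rfl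

lemma bc_dist2_iff (hc : G.Connected) {a b : V} :
    G.Adj a b ↔ (bipartiteConstruction G).dist (Sum.inl a) (Sum.inl b) = 2 := by
  have hHc := bc_connected hc
  constructor
  · intro h
    have hle : (bipartiteConstruction G).dist (Sum.inl a) (Sum.inl b) ≤ 2 := by
      have h6 := SimpleGraph.dist_le (SimpleGraph.Walk.cons
        (bc_adj_mk (e := ⟨s(a,b), h⟩) (i := true) (Sym2.mem_mk_left _ _))
        (SimpleGraph.Walk.cons
          ((bc_adj_mk (e := ⟨s(a,b), h⟩) (i := true) (Sym2.mem_mk_right _ _)).symm)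
          SimpleGraph.Walk.nil))
      simpa using h6
    have h0 : (bipartiteConstruction G).dist (Sum.inl a) (Sum.inl b) ≠ 0 := by
      intro hcon
      have h7 := hHc.dist_eq_zero_iff.mp hcon
      simp only [Sum.inl.injEq] at h7
      exact h.ne h7
    have h1 : (bipartiteConstruction G).dist (Sum.inl a) (Sum.inl b) ≠ 1 := by
      intro hcon
      have hadj := SimpleGraph.dist_eq_one_iff_adj.mp hcon
      rcases (bc_adj.mp hadj).2 with ⟨u, e, i, -, h2, -⟩ | ⟨u, e, i, -, h2, -⟩ <;>
        exact absurd h2 (by simp)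
    omega
  · intro hd
    obtain ⟨p, hp⟩ := (hHc.preconnected (Sum.inl a) (Sum.inl b)).exists_walk_length_eq_dist
    rw [hd] at hp
    have hne : a ≠ b := by
      intro hcon
      subst hcon
      rw [hHc.dist_eq_zero_iff.mpr rfl] at hd
      omega
    rcases p with _ | @⟨_, m, _, h1, q⟩
    · simp at hp
    · rcases q with _ | @⟨_, m2, _, h2, r⟩
      · simp at hp
      · rcases r with _ | @⟨_, m3, _, h3, rr⟩
        · -- h1 : Adj (inl a) m, h2 : Adj m (inl b)
          have hm : ∃ e : G.edgeSet, ∃ i, m = Sum.inr (e, i) ∧ a ∈ (e : Sym2 V) := by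
            rcases (bc_adj.mp h1).2 with ⟨u, e, i, hu, hmm, hmem⟩ | ⟨u, e, i, hu, hmm, hmem⟩
            · obtain rfl : a = u := Sum.inl.inj hu
              exact ⟨e, i, hmm, hmem⟩
            · exact absurd hmm (by simp)
          obtain ⟨e, i, rfl, hamem⟩ := hm
          have hbmem : b ∈ (e : Sym2 V) := by
            rcases (bc_adj.mp h2).2 with ⟨u, e', i', hu, hmm, hmem⟩ | ⟨u, e', i', hu, hmm, hmem⟩
            · exact absurd hu (by simp)
            · simp only [Sum.inr.injEq, Prod.mk.injEq] at hmm
              rcases hmm with ⟨rfl, rfl⟩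
              obtain rfl : b = u := Sum.inl.inj hu
              exact hmem
          have heq : (e : Sym2 V) = s(a, b) := (Sym2.mem_and_mem_iff hne).mp ⟨hamem, hbmem⟩
          have he := e.2
          rw [heq] at he
          exact he
        · simp [SimpleGraph.Walk.length_cons] at hp

lemma bc_lift [Fintype V] (hc : G.Connected) (hV : 3 ≤ Fintype.card V)
    (ψ : bipartiteConstruction G ≃g bipartiteConstruction G) (v : V) :
    ∃ v', ψ (Sum.inl v) = Sum.inl v' := by
  obtain ⟨v₀, u₁, u₂, hne, h1, h2⟩ := exists_two_nbrs hc hV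
  have hd3 := bc_deg3_inl h1 h2 hne
  have inv_char : ∀ x : V ⊕ (G.edgeSet × Bool),
      (∃ b, HasDeg3 (bipartiteConstruction G) b ∧
        (bipartiteConstruction G).dist x b % 2 = 0) → ∃ v', x = Sum.inl v' := by
    rintro x ⟨b, hb3, hpar⟩
    obtain ⟨vb, rfl⟩ : ∃ vb, b = Sum.inl vb := by
      cases b with
      | inl vb => exact ⟨vb, rfl⟩
      | inr p => exact absurd hb3 (by obtain ⟨e,i⟩ := p; exact bc_not_deg3_inr e i)
    cases x with
    | inl w => exact ⟨w, rfl⟩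
    | inr p =>
      exfalso
      rw [bc_dist_parity hc] at hpar
      obtain ⟨e, i⟩ := p
      simp [bsideN] at hpar
  apply inv_char
  refine ⟨ψ (Sum.inl v₀), (iso_hasDeg3 ψ _).mpr hd3, ?_⟩
  rw [iso_dist_eq ψ, bc_dist_parity hc]
  simp [bsideN]

lemma bc_forward [Fintype V] (hc : G.Connected) (hV : 3 ≤ Fintype.card V)
    (ψ : bipartiteConstruction G ≃g bipartiteConstruction G)
    (hψ : ∀ w, ψ w ≠ w) : HasFPFAut G := by
  have spec : ∀ v, ψ (Sum.inl v) = Sum.inl ((bc_lift hc hV ψ v).choose) :=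
    fun v => (bc_lift hc hV ψ v).choose_spec
  have spec' : ∀ v, ψ.symm (Sum.inl v) = Sum.inl ((bc_lift hc hV ψ.symm v).choose) :=
    fun v => (bc_lift hc hV ψ.symm v).choose_spec
  set f : V → V := fun v => (bc_lift hc hV ψ v).choose with hf
  set g : V → V := fun v => (bc_lift hc hV ψ.symm v).choose with hg
  have hleft : ∀ v, g (f v) = v := by
    intro v
    have h5 : ψ.symm (ψ (Sum.inl v)) = Sum.inl v := ψ.symm_apply_apply _
    rw [spec v, spec' (f v)] at h5
    exact Sum.inl.inj h5
  have hright : ∀ v, f (g v) = v := by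
    intro v
    have h5 : ψ (ψ.symm (Sum.inl v)) = Sum.inl v := ψ.apply_symm_apply _
    rw [spec' v, spec (g v)] at h5
    exact Sum.inl.inj h5
  have hmapadj : ∀ a b, G.Adj (f a) (f b) ↔ G.Adj a b := by
    intro a b
    rw [bc_dist2_iff hc, bc_dist2_iff hc, ← spec a, ← spec b, iso_dist_eq ψ]
  refine ⟨⟨⟨f, g, hleft, hright⟩, ?_⟩, ?_⟩
  · intro a b
    exact hmapadj a b
  · intro v hcon
    apply hψ (Sum.inl v)
    rw [spec v]
    have h5 : f v = v := hcon
    exact congrArg Sum.inl h5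

lemma bc_backward (φ : G ≃g G) (hφ : ∀ v, φ v ≠ v) :
    ∃ ψ : bipartiteConstruction G ≃g bipartiteConstruction G,
      (∀ w, ψ w ≠ w) ∧
      (∀ E : (bipartiteConstruction G).edgeSet,
        Sym2.map ψ (E : Sym2 (V ⊕ (G.edgeSet × Bool))) ≠
          (E : Sym2 (V ⊕ (G.edgeSet × Bool)))) := by
  classical
  set φe : G.edgeSet ≃ G.edgeSet := φ.mapEdgeSet with hφedef
  have hφecoe : ∀ e : G.edgeSet, ((φe e : G.edgeSet) : Sym2 V) = Sym2.map φ (e : Sym2 V) :=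
    fun _ => rfl
  set bnot : Bool ≃ Bool := ⟨Bool.not, Bool.not, Bool.not_not, Bool.not_not⟩ with hbnot
  set F : (V ⊕ (G.edgeSet × Bool)) ≃ (V ⊕ (G.edgeSet × Bool)) :=
    Equiv.sumCongr φ.toEquiv (Equiv.prodCongr φe bnot) with hF
  have hFinl : ∀ u, F (Sum.inl u) = Sum.inl (φ u) := fun _ => rfl
  have hFinr : ∀ e i, F (Sum.inr (e,i)) = Sum.inr (φe e, !i) := fun _ _ => rfl
  have hmem : ∀ (u : V) (e : G.edgeSet), u ∈ (e : Sym2 V) →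
      φ u ∈ ((φe e : G.edgeSet) : Sym2 V) := by
    intro u e h
    rw [hφecoe]
    exact Sym2.mem_map.mpr ⟨u, h, rfl⟩
  have hmem' : ∀ (u : V) (e : G.edgeSet), φ u ∈ ((φe e : G.edgeSet) : Sym2 V) →
      u ∈ (e : Sym2 V) := by
    intro u e h
    rw [hφecoe] at h
    obtain ⟨a, ha, hfa⟩ := Sym2.mem_map.mp h
    rwa [← φ.toEquiv.injective hfa]
  refine ⟨⟨F, ?_⟩, ?_, ?_⟩
  · intro x y
    rw [bc_adj, bc_adj]
    constructor
    · rintro ⟨hne, hor⟩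
      refine ⟨fun hxy => hne (by rw [hxy]), ?_⟩
      rcases hor with ⟨u, e, i, h1, h2, h3⟩ | ⟨u, e, i, h1, h2, h3⟩
      · cases x with
        | inr p => exact absurd (by rw [hFinr p.1 p.2] at h1; exact h1) (by simp)
        | inl a =>
          rw [hFinl] at h1
          obtain rfl : u = φ a := (Sum.inl.inj h1).symm
          cases y with
          | inl b => exact absurd (by rw [hFinl b] at h2; exact h2) (by simp)
          | inr q =>
            obtain ⟨e₀, i₀⟩ := q
            rw [hFinr] at h2
            simp only [Sum.inr.injEq, Prod.mk.injEq] at h2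
            obtain ⟨rfl, -⟩ := h2
            exact Or.inl ⟨a, e₀, i₀, rfl, rfl, hmem' a e₀ h3⟩
      · cases y with
        | inr p => exact absurd (by rw [hFinr p.1 p.2] at h1; exact h1) (by simp)
        | inl a =>
          rw [hFinl] at h1
          obtain rfl : u = φ a := (Sum.inl.inj h1).symm
          cases x with
          | inl b => exact absurd (by rw [hFinl b] at h2; exact h2) (by simp)
          | inr q =>
            obtain ⟨e₀, i₀⟩ := q
            rw [hFinr] at h2
            simp only [Sum.inr.injEq, Prod.mk.injEq] at h2
            obtain ⟨rfl, -⟩ := h2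
            exact Or.inr ⟨a, e₀, i₀, rfl, rfl, hmem' a e₀ h3⟩
    · rintro ⟨hne, hor⟩
      refine ⟨F.injective.ne hne, ?_⟩
      rcases hor with ⟨u, e, i, rfl, rfl, h3⟩ | ⟨u, e, i, rfl, rfl, h3⟩
      · exact Or.inl ⟨φ u, φe e, !i, by rw [hFinl], by rw [hFinr], hmem u e h3⟩
      · exact Or.inr ⟨φ u, φe e, !i, by rw [hFinl], by rw [hFinr], hmem u e h3⟩
  · intro w
    cases w with
    | inl v =>
      rw [RelIso.coe_fn_mk, hFinl]
      simp only [ne_eq, Sum.inl.injEq]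
      exact hφ v
    | inr p =>
      obtain ⟨e, i⟩ := p
      rw [RelIso.coe_fn_mk, hFinr]
      simp only [ne_eq, Sum.inr.injEq, Prod.mk.injEq, not_and]
      intro _
      cases i <;> simp
  · intro E hcon
    obtain ⟨⟨x, y⟩, hxy⟩ := Quot.exists_rep (E : Sym2 (V ⊕ (G.edgeSet × Bool)))
    have hxy' : s(x, y) = (E : Sym2 (V ⊕ (G.edgeSet × Bool))) := hxy
    have hadj : (bipartiteConstruction G).Adj x y := by
      have h5 := E.2
      rw [← hxy'] at h5
      exact h5
    rw [← hxy', Sym2.map_pair_eq] at hcon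
    rcases (bc_adj.mp hadj).2 with ⟨u, e, i, rfl, rfl, h3⟩ | ⟨u, e, i, rfl, rfl, h3⟩
    · simp only [RelIso.coe_fn_mk] at hcon; rw [hFinl, hFinr] at hcon
      rcases Sym2.eq_iff.mp hcon with ⟨h4, h5⟩ | ⟨h4, h5⟩
      · simp only [Sum.inr.injEq, Prod.mk.injEq] at h5
        cases i <;> simp_all
      · simp at h4
    · simp only [RelIso.coe_fn_mk] at hcon; rw [hFinl, hFinr] at hcon
      rcases Sym2.eq_iff.mp hcon with ⟨h4, h5⟩ | ⟨h4, h5⟩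
      · simp only [Sum.inr.injEq, Prod.mk.injEq] at h4
        cases i <;> simp_all
      · simp at h5

end BCSection

/-- for a connected finite simple graph `G` with at least 3 vertices and any
`k ≥ 1`, the `k`-subdivision of the bipartite construction of `G` admits a fixed point
free automorphism iff `G` does. -/
theorem kSubdivision_bipartite_fpfAut_iff {V : Type} [Fintype V] (G : SimpleGraph V)
    (hconn : G.Connected) (hV : 3 ≤ Fintype.card V) (k : ℕ) (hk : 1 ≤ k)
    (L : LinearOrder (V ⊕ (G.edgeSet × Bool))) :
    HasFPFAut (kSubdivision L k (bipartiteConstruction G)) ↔ HasFPFAut G := by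
  constructor
  · intro hS
    have hHc := bc_connected hconn
    obtain ⟨v, u₁, u₂, hne, h1, h2⟩ := exists_two_nbrs hconn hV
    have h3 : ∃ w, HasDeg3 (bipartiteConstruction G) w :=
      ⟨Sum.inl v, bc_deg3_inl h1 h2 hne⟩
    obtain ⟨ψ, hψ⟩ := subdiv_forward (L := L) hHc hk h3 hS
    exact bc_forward hconn hV ψ hψ
  · intro hG
    obtain ⟨φ, hφ⟩ := hG
    obtain ⟨ψ, hψv, hψe⟩ := bc_backward φ hφ
    exact subdiv_backward (L := L) hk ψ hψv hψe
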